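/- Let E be a standard Borel measurable space, let l ≥ 1, let P be a probability measure on E^l, and let Q be a probability measure on E. Let P̄ = (1/l)·(P_1 + ⋯ + P_l) be the average of the marginals P_k of P (the pushforwards of P under the coordinate projections). Then D(P ‖ Q^{⊗l}) ≥ l · D(P̄ ‖ Q). -/

import Mathlib

open MeasureTheory Real
open scoped ENNReal NNReal

open Filter Topology

lemma my_lintegral_pi_pow {E : Type*} [MeasurableSpace E] (Q : Measure E) [SigmaFinite Q] :
    ∀ {n : ℕ} {h : E → ℝ≥0∞}, Measurable h →
      ∫⁻ x : Fin n → E, ∏ i, h (x i) ∂(Measure.pi fun _ => Q) = (∫⁻ a, h a ∂Q) ^ n := by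
  intro n
  induction n with
  | zero =>
    intro h hm
    simp [lintegral_const, Measure.pi_univ]
  | succ n ih =>
    intro h hm
    have hmp := measurePreserving_piFinSuccAbove (fun _ : Fin (n + 1) => (Q : Measure E)) 0
    have hgm : Measurable fun y : E × (Fin n → E) => h y.1 * ∏ i, h (y.2 i) :=
      (hm.comp measurable_fst).mul
        (Finset.measurable_prod _ fun i _ => hm.comp ((measurable_pi_apply i).comp measurable_snd))
    have := hmp.lintegral_comp hgm
    have hcomp : ∀ x : Fin (n + 1) → E,
        (fun y : E × (Fin n → E) => h y.1 * ∏ i, h (y.2 i))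
          (MeasurableEquiv.piFinSuccAbove (fun _ => E) 0 x) = ∏ i, h (x i) := by
      intro x
      rw [Fin.prod_univ_succ]
      simp [MeasurableEquiv.piFinSuccAbove, Fin.succAbove_zero, Fin.tail]
    calc ∫⁻ x : Fin (n + 1) → E, ∏ i, h (x i) ∂(Measure.pi fun _ => Q)
        = ∫⁻ x : Fin (n + 1) → E,
            (fun y : E × (Fin n → E) => h y.1 * ∏ i, h (y.2 i))
              (MeasurableEquiv.piFinSuccAbove (fun _ => E) 0 x) ∂(Measure.pi fun _ => Q) := by
          simp_rw [hcomp]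
      _ = ∫⁻ y : E × (Fin n → E), h y.1 * ∏ i, h (y.2 i)
            ∂(Q.prod (Measure.pi fun _ : Fin n => Q)) := this
      _ = (∫⁻ a, h a ∂Q) * (∫⁻ a, h a ∂Q) ^ n := by
          rw [lintegral_prod_mul (f := h) (g := fun z : Fin n → E => ∏ i, h (z i)) hm.aemeasurable
            (Finset.measurable_prod _ fun i _ => hm.comp (measurable_pi_apply i)).aemeasurable,
            ih hm]
      _ = (∫⁻ a, h a ∂Q) ^ (n + 1) := by rw [pow_succ]; ring

lemma my_map_eval_pi {E : Type*} [MeasurableSpace E] {l : ℕ} (Q : Measure E)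
    [IsProbabilityMeasure Q] (k : Fin l) :
    (Measure.pi fun _ : Fin l => Q).map (fun f => f k) = Q := by
  classical
  ext s hs
  rw [Measure.map_apply (measurable_pi_apply k) hs]
  have : (fun f : Fin l → E => f k) ⁻¹' s
      = Set.pi Set.univ (Function.update (fun _ : Fin l => Set.univ) k s) := Set.eval_preimage
  rw [this, Measure.pi_pi]
  rw [show (∏ i : Fin l, Q (Function.update (fun _ : Fin l => Set.univ) k s i))
      = ∏ i : Fin l, Function.update (fun _ : Fin l => Q Set.univ) k (Q s) i from
      Finset.prod_congr rfl fun i _ => by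
        rcases eq_or_ne i k with rfl | hik
        · simp
        · simp [Function.update_of_ne hik]]
  rw [Finset.prod_update_of_mem (Finset.mem_univ k)]
  simp

lemma my_gibbs {α : Type*} [MeasurableSpace α] (μ ν : Measure α) [IsProbabilityMeasure μ]
    [IsFiniteMeasure ν] (hμν : μ ≪ ν) (hi : Integrable (llr μ ν) μ) {g : α → ℝ}
    (hg : Measurable g) (hgi : Integrable g μ) {Z : ℝ} (hZ0 : 0 ≤ Z)
    (hZ : ∫⁻ x, ENNReal.ofReal (Real.exp (g x)) ∂ν ≤ ENNReal.ofReal Z) :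
    ∫ x, g x ∂μ ≤ ∫ x, llr μ ν x ∂μ + (Z - 1) := by
  set h : α → ℝ := fun x => Real.exp (g x - llr μ ν x) with hh
  have hhm : Measurable h := (hg.sub (measurable_llr _ _)).exp
  have hkey : ∫⁻ x, ENNReal.ofReal (h x) ∂μ ≤ ENNReal.ofReal Z := by
    conv_lhs => rw [← Measure.withDensity_rnDeriv_eq μ ν hμν]
    rw [lintegral_withDensity_eq_lintegral_mul _ (Measure.measurable_rnDeriv μ ν)
      hhm.ennreal_ofReal]
    refine le_trans (lintegral_mono_ae ?_) hZ
    filter_upwards [Measure.rnDeriv_lt_top μ ν] with x hx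
    simp only [Pi.mul_apply]
    by_cases h0 : μ.rnDeriv ν x = 0
    · simp [h0]
    · have ht : 0 < (μ.rnDeriv ν x).toReal := ENNReal.toReal_pos h0 hx.ne
      have hrw : μ.rnDeriv ν x = ENNReal.ofReal (μ.rnDeriv ν x).toReal :=
        (ENNReal.ofReal_toReal hx.ne).symm
      rw [hrw, ← ENNReal.ofReal_mul ht.le]
      apply ENNReal.ofReal_le_ofReal
      have : h x = Real.exp (g x) / (μ.rnDeriv ν x).toReal := by
        rw [hh]
        simp only [llr]
        rw [Real.exp_sub, Real.exp_log ht]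
      rw [this, mul_div_cancel₀ _ ht.ne']
  have hhi : Integrable h μ := by
    refine ⟨hhm.aestronglyMeasurable, ?_⟩
    rw [hasFiniteIntegral_iff_norm]
    have : ∀ x, ENNReal.ofReal ‖h x‖ = ENNReal.ofReal (h x) := fun x => by
      rw [Real.norm_of_nonneg (Real.exp_pos _).le]
    simp_rw [this]
    exact lt_of_le_of_lt hkey ENNReal.ofReal_lt_top
  have hint : ∫ x, h x ∂μ ≤ Z := by
    rw [integral_eq_lintegral_of_nonneg_ae (Filter.Eventually.of_forall fun x => (Real.exp_pos _).le)
      hhm.aestronglyMeasurable]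
    calc (∫⁻ x, ENNReal.ofReal (h x) ∂μ).toReal
        ≤ (ENNReal.ofReal Z).toReal := ENNReal.toReal_mono ENNReal.ofReal_ne_top hkey
      _ = Z := ENNReal.toReal_ofReal hZ0
  have hpt : ∀ x, g x - llr μ ν x ≤ h x - 1 := fun x => by
    have := Real.add_one_le_exp (g x - llr μ ν x)
    rw [hh]; dsimp only; linarith
  have hmono : ∫ x, (g x - llr μ ν x) ∂μ ≤ ∫ x, (h x - 1) ∂μ :=
    integral_mono (hgi.sub hi) (hhi.sub (integrable_const 1)) hpt
  rw [integral_sub hgi hi, integral_sub hhi (integrable_const 1), integral_const,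
    probReal_univ] at hmono
  simp only [ENNReal.toReal_one, smul_eq_mul, one_mul] at hmono
  linarith

lemma my_real_bound (t : ℝ) (ht : 0 ≤ t) : t * max (-Real.log t) 0 ≤ 1 := by
  rcases eq_or_lt_of_le ht with h0 | hpos
  · simp [← h0]
  rcases le_or_gt 1 t with h1 | h1
  · have : Real.log t ≥ 0 := Real.log_nonneg h1
    rw [max_eq_right (by linarith)]
    simp
  · have hinv : 0 < t⁻¹ := inv_pos.2 hpos
    have hlog : Real.log t⁻¹ ≤ t⁻¹ - 1 := Real.log_le_sub_one_of_pos hinv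
    rw [Real.log_inv] at hlog
    have hmax : max (-Real.log t) 0 ≤ t⁻¹ - 1 := by
      apply max_le hlog
      have : (1:ℝ) ≤ t⁻¹ := (one_le_inv_iff₀).2 ⟨hpos, h1.le⟩
      linarith
    calc t * max (-Real.log t) 0 ≤ t * (t⁻¹ - 1) :=
          mul_le_mul_of_nonneg_left hmax ht
      _ = 1 - t := by field_simp
      _ ≤ 1 := by linarith

open scoped Classical in
/-- Kullback-Leibler divergence: the integral of `log (dm/dn)` with respect to `m`
if `m` is absolutely continuous w.r.t. `n` and the log-density is `m`-integrable,
and infinity otherwise. -/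
noncomputable def klDiv {α : Type*} [MeasurableSpace α] (μ ν : Measure α) : ℝ≥0∞ :=
  if μ ≪ ν ∧ Integrable (fun x => log (μ.rnDeriv ν x).toReal) μ then
    ENNReal.ofReal (∫ x, log (μ.rnDeriv ν x).toReal ∂μ)
  else ⊤

/-- The divergence of `P` from the `l`-fold product `Q^l` is at least `l` times the
divergence of the average of the marginals of `P` from `Q`. -/
theorem klDiv_avg_marginal_le {E : Type*} [MeasurableSpace E] [StandardBorelSpace E]
    (l : ℕ) (hl : 1 ≤ l) (P : Measure (Fin l → E)) (Q : Measure E)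
    [IsProbabilityMeasure P] [IsProbabilityMeasure Q] :
    (l : ℝ≥0∞) * klDiv ((l : ℝ≥0∞)⁻¹ • ∑ k : Fin l, P.map (fun f => f k)) Q ≤
      klDiv P (Measure.pi (fun _ : Fin l => Q)) := by
  classical
  set ν : Measure (Fin l → E) := Measure.pi (fun _ : Fin l => Q) with hνdef
  set Pbar : Measure E := (l : ℝ≥0∞)⁻¹ • ∑ k : Fin l, P.map (fun f => f k) with hPbardef
  by_cases hc : P ≪ ν ∧ Integrable (fun x => log (P.rnDeriv ν x).toReal) P
  swap
  · have : klDiv P ν = ⊤ := by unfold klDiv; rw [if_neg hc]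
    rw [this]; exact le_top
  obtain ⟨hPν, hPint⟩ := hc
  set D : ℝ := ∫ x, log (P.rnDeriv ν x).toReal ∂P with hDdef
  have hRHS : klDiv P ν = ENNReal.ofReal D := by
    unfold klDiv; rw [if_pos ⟨hPν, hPint⟩]
  -- basic numerics
  have hl0 : (l : ℝ≥0∞) ≠ 0 := by exact_mod_cast (Nat.pos_of_ne_zero (by omega)).ne'
  have hlt : (l : ℝ≥0∞) ≠ ⊤ := ENNReal.natCast_ne_top l
  have hlR : (0 : ℝ) < l := by exact_mod_cast hl
  -- marginals
  have hPk_univ : ∀ k : Fin l, (P.map (fun f : Fin l → E => f k)) Set.univ = 1 := by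
    intro k
    rw [Measure.map_apply (measurable_pi_apply k) MeasurableSet.univ]
    simp
  haveI hPbarP : IsProbabilityMeasure Pbar := by
    constructor
    rw [hPbardef]
    simp only [Measure.smul_apply, Measure.finset_sum_apply, hPk_univ, Finset.sum_const,
      Finset.card_univ, Fintype.card_fin, nsmul_eq_mul, mul_one, smul_eq_mul]
    exact ENNReal.inv_mul_cancel hl0 hlt
  have hPkQ : ∀ k : Fin l, P.map (fun f : Fin l → E => f k) ≪ Q := by
    intro k
    have := hPν.map (f := fun f : Fin l → E => f k) (measurable_pi_apply k : Measurable fun f : Fin l → E => f k)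
    rwa [hνdef, my_map_eval_pi Q k] at this
  have hPbarQ : Pbar ≪ Q := by
    refine Measure.AbsolutelyContinuous.mk fun s hs hQs => ?_
    rw [hPbardef, Measure.smul_apply, Measure.finset_sum_apply]
    have : ∀ k : Fin l, (P.map (fun f : Fin l → E => f k)) s = 0 := fun k => hPkQ k hQs
    simp [this]
  have hPkPbar : ∀ k : Fin l, P.map (fun f : Fin l → E => f k) ≤ (l : ℝ≥0∞) • Pbar := by
    intro k
    rw [hPbardef, smul_smul, ENNReal.mul_inv_cancel hl0 hlt, one_smul]
    intro s
    calc (P.map (fun f : Fin l → E => f k)) s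
        = ∑ i ∈ ({k} : Finset (Fin l)), (P.map (fun f : Fin l → E => f i)) s := by simp
      _ ≤ ∑ i : Fin l, (P.map (fun f : Fin l → E => f i)) s :=
          Finset.sum_le_sum_of_subset (Finset.subset_univ _)
      _ = (∑ i : Fin l, P.map (fun f : Fin l → E => f i)) s :=
          (Measure.finset_sum_apply _ _ _).symm
  -- density of Pbar
  set φ : E → ℝ := fun a => log (Pbar.rnDeriv Q a).toReal with hφdef
  have hφm : Measurable φ := (Measure.measurable_rnDeriv _ _).ennreal_toReal.log
  have hfbm : Measurable (Pbar.rnDeriv Q) := Measure.measurable_rnDeriv _ _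
  have hfb_one : ∫⁻ a, Pbar.rnDeriv Q a ∂Q = 1 := by
    rw [Measure.lintegral_rnDeriv hPbarQ]; exact measure_univ
  -- negative part of φ is integrable
  have hneg_lint : ∫⁻ a, ENNReal.ofReal (max (-φ a) 0) ∂Pbar ≤ 1 := by
    conv_lhs => rw [← Measure.withDensity_rnDeriv_eq Pbar Q hPbarQ]
    rw [lintegral_withDensity_eq_lintegral_mul _ hfbm (g := fun a => ENNReal.ofReal (max (-φ a) 0)) (hφm.neg.max measurable_const).ennreal_ofReal]
    have hb : ∀ᵐ a ∂Q, (Pbar.rnDeriv Q * fun a => ENNReal.ofReal (max (-φ a) 0)) a ≤ 1 := by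
      filter_upwards [Measure.rnDeriv_lt_top Pbar Q] with a ha
      simp only [Pi.mul_apply]
      have hrw : Pbar.rnDeriv Q a = ENNReal.ofReal (Pbar.rnDeriv Q a).toReal :=
        (ENNReal.ofReal_toReal ha.ne).symm
      rw [hrw, ← ENNReal.ofReal_mul ENNReal.toReal_nonneg, ← ENNReal.ofReal_one]
      exact ENNReal.ofReal_le_ofReal
        (my_real_bound (Pbar.rnDeriv Q a).toReal ENNReal.toReal_nonneg)
    calc ∫⁻ a, (Pbar.rnDeriv Q * fun a => ENNReal.ofReal (max (-φ a) 0)) a ∂Q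
        ≤ ∫⁻ _, 1 ∂Q := lintegral_mono_ae hb
      _ = 1 := by simp
  have hφneg_int : Integrable (fun a => max (-φ a) 0) Pbar := by
    refine ⟨(hφm.neg.max measurable_const).aestronglyMeasurable, ?_⟩
    rw [hasFiniteIntegral_iff_norm]
    have : ∀ a, ENNReal.ofReal ‖max (-φ a) 0‖ = ENNReal.ofReal (max (-φ a) 0) := fun a => by
      rw [Real.norm_of_nonneg (le_max_right _ _)]
    simp_rw [this]
    exact lt_of_le_of_lt hneg_lint ENNReal.one_lt_top
  -- generic transfer of integrability of truncations
  have hmin_int : ∀ (μ' : Measure E) (_ : Integrable (fun a => max (-φ a) 0) μ')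
      (_ : IsFiniteMeasure μ') (n : ℕ), Integrable (fun a => min (φ a) (n : ℝ)) μ' := by
    intro μ' hneg hfin n
    refine Integrable.mono' ((integrable_const (n : ℝ)).add hneg)
      (hφm.min measurable_const).aestronglyMeasurable
      (Filter.Eventually.of_forall fun a => ?_)
    simp only [Pi.add_apply]
    rcases le_total (φ a) 0 with h | h
    · rw [min_eq_left (h.trans (Nat.cast_nonneg n)), Real.norm_eq_abs, abs_of_nonpos h]
      have h1 : -φ a ≤ max (-φ a) 0 := le_max_left _ _
      have h2 : (0:ℝ) ≤ (n:ℝ) := Nat.cast_nonneg n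
      linarith
    · rw [Real.norm_eq_abs, abs_of_nonneg (le_min h (Nat.cast_nonneg n))]
      exact (min_le_right _ _).trans (le_add_of_nonneg_right (le_max_right _ _))
  have hφneg_int_Pk : ∀ k : Fin l,
      Integrable (fun a => max (-φ a) 0) (P.map (fun f : Fin l → E => f k)) := by
    intro k
    exact (hφneg_int.smul_measure hlt).mono_measure (hPkPbar k)
  -- the null set where the density vanishes
  set S : Set E := {a | Pbar.rnDeriv Q a = 0} with hSdef
  have hSm : MeasurableSet S := hfbm (measurableSet_singleton 0)
  have hPbarS : Pbar S = 0 := by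
    have hpos := Measure.rnDeriv_pos hPbarQ
    have hsub : S ⊆ {a | ¬ 0 < Pbar.rnDeriv Q a} := fun a ha => by
      simp only [hSdef, Set.mem_setOf_eq] at ha ⊢
      rw [ha]; simp
    exact measure_mono_null hsub (ae_iff.mp hpos)
  have hPkS : ∀ k : Fin l, (P.map (fun f : Fin l → E => f k)) S = 0 := by
    intro k
    refine le_antisymm ?_ zero_le
    calc (P.map (fun f : Fin l → E => f k)) S ≤ ((l : ℝ≥0∞) • Pbar) S := hPkPbar k S
      _ = 0 := by rw [Measure.smul_apply, hPbarS, smul_zero]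
  -- the key estimate, for each truncation level n
  have hkey : ∀ n : ℕ, (l : ℝ) * ∫ a, min (φ a) (n : ℝ) ∂Pbar ≤ D := by
    intro n
    have hstep : ∀ c : ℝ,
        (∑ k : Fin l, ∫ a, min (φ a) (n : ℝ) ∂(P.map (fun f : Fin l → E => f k)))
          ≤ D + ((1 + Real.exp (-c)) ^ l - 1) := by
      intro c
      set ψ : E → ℝ := fun a => min (φ a) (n : ℝ) - S.indicator (fun _ => c) a with hψdef
      have hψm : Measurable ψ :=
        (hφm.min measurable_const).sub (measurable_const.indicator hSm)
      have hψae : ∀ k : Fin l,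
          ψ =ᵐ[P.map (fun f : Fin l → E => f k)] fun a => min (φ a) (n : ℝ) := by
        intro k
        filter_upwards [compl_mem_ae_iff.2 (hPkS k)] with a ha
        rw [hψdef]
        simp [Set.indicator_of_notMem ha]
      have hψint : ∀ k : Fin l, Integrable ψ (P.map (fun f : Fin l → E => f k)) := fun k =>
        (hmin_int _ (hφneg_int_Pk k)
          (by haveI := Measure.isProbabilityMeasure_map (f := fun f : Fin l → E => f k) (μ := P) (measurable_pi_apply k).aemeasurable; infer_instance) n).congr
          (hψae k).symm
      have hterm_int : ∀ k : Fin l, Integrable (fun x : Fin l → E => ψ (x k)) P := by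
        intro k
        have := (integrable_map_measure hψm.aestronglyMeasurable
          (measurable_pi_apply k).aemeasurable).mp (hψint k)
        exact this
      have hgm : Measurable fun x : Fin l → E => ∑ k, ψ (x k) :=
        Finset.measurable_sum _ fun k _ => hψm.comp (measurable_pi_apply k)
      have hgi : Integrable (fun x : Fin l → E => ∑ k, ψ (x k)) P :=
        integrable_finset_sum _ fun k _ => hterm_int k
      have hZ0 : (0 : ℝ) ≤ (1 + Real.exp (-c)) ^ l := by positivity
      have hZb : ∫⁻ x, ENNReal.ofReal (Real.exp (∑ k, ψ (x k))) ∂ν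
          ≤ ENNReal.ofReal ((1 + Real.exp (-c)) ^ l) := by
        have hexp : ∀ x : Fin l → E, ENNReal.ofReal (Real.exp (∑ k, ψ (x k)))
            = ∏ k, ENNReal.ofReal (Real.exp (ψ (x k))) := by
          intro x
          rw [Real.exp_sum, ENNReal.ofReal_prod_of_nonneg fun i _ => (Real.exp_pos _).le]
        simp_rw [hexp]
        rw [hνdef, my_lintegral_pi_pow Q hψm.exp.ennreal_ofReal]
        have hone : ∫⁻ a, ENNReal.ofReal (Real.exp (ψ a)) ∂Q
            ≤ ENNReal.ofReal (1 + Real.exp (-c)) := by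
          have hb : ∀ᵐ a ∂Q, ENNReal.ofReal (Real.exp (ψ a))
              ≤ Pbar.rnDeriv Q a + ENNReal.ofReal (Real.exp (-c)) := by
            filter_upwards [Measure.rnDeriv_lt_top Pbar Q] with a ha
            by_cases hmem : a ∈ S
            · have h0 : Pbar.rnDeriv Q a = 0 := hmem
              have hφ0 : φ a = 0 := by rw [hφdef]; simp [h0]
              have hψc : ψ a = -c := by
                rw [hψdef]
                simp only [hφ0, Set.indicator_of_mem hmem]
                rw [min_eq_left (by exact_mod_cast Nat.cast_nonneg (α := ℝ) n)]
                ring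
              rw [hψc]
              exact le_add_self
            · have h0 : Pbar.rnDeriv Q a ≠ 0 := hmem
              have ht : 0 < (Pbar.rnDeriv Q a).toReal := ENNReal.toReal_pos h0 ha.ne
              have hψle : ψ a ≤ φ a := by
                rw [hψdef]
                simp only [Set.indicator_of_notMem hmem, sub_zero]
                exact min_le_left _ _
              have hle : Real.exp (ψ a) ≤ (Pbar.rnDeriv Q a).toReal := by
                calc Real.exp (ψ a) ≤ Real.exp (φ a) := Real.exp_le_exp.2 hψle
                  _ = (Pbar.rnDeriv Q a).toReal := by rw [hφdef]; exact Real.exp_log ht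
              calc ENNReal.ofReal (Real.exp (ψ a))
                  ≤ ENNReal.ofReal (Pbar.rnDeriv Q a).toReal := ENNReal.ofReal_le_ofReal hle
                _ = Pbar.rnDeriv Q a := ENNReal.ofReal_toReal ha.ne
                _ ≤ _ := le_self_add
          calc ∫⁻ a, ENNReal.ofReal (Real.exp (ψ a)) ∂Q
              ≤ ∫⁻ a, (Pbar.rnDeriv Q a + ENNReal.ofReal (Real.exp (-c))) ∂Q :=
                lintegral_mono_ae hb
            _ = 1 + ENNReal.ofReal (Real.exp (-c)) := by
                rw [lintegral_add_right _ measurable_const, hfb_one, lintegral_const,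
                  measure_univ, mul_one]
            _ = ENNReal.ofReal (1 + Real.exp (-c)) := by
                rw [ENNReal.ofReal_add zero_le_one (Real.exp_pos _).le, ENNReal.ofReal_one]
        calc (∫⁻ a, ENNReal.ofReal (Real.exp (ψ a)) ∂Q) ^ l
            ≤ ENNReal.ofReal (1 + Real.exp (-c)) ^ l := pow_le_pow_left₀ zero_le hone l
          _ = ENNReal.ofReal ((1 + Real.exp (-c)) ^ l) := by
              rw [ENNReal.ofReal_pow (by positivity)]
      have hgibbs := my_gibbs P ν hPν hPint hgm hgi hZ0 hZb
      have hllr : ∫ x, llr P ν x ∂P = D := rfl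
      have hsum : ∫ x, (∑ k, ψ (x k)) ∂P
          = ∑ k : Fin l, ∫ a, min (φ a) (n : ℝ) ∂(P.map (fun f : Fin l → E => f k)) := by
        rw [integral_finset_sum _ fun k _ => hterm_int k]
        refine Finset.sum_congr rfl fun k _ => ?_
        calc ∫ x : Fin l → E, ψ (x k) ∂P
            = ∫ a, ψ a ∂(P.map (fun f : Fin l → E => f k)) :=
              (integral_map (measurable_pi_apply k).aemeasurable hψm.aestronglyMeasurable).symm
          _ = ∫ a, min (φ a) (n : ℝ) ∂(P.map (fun f : Fin l → E => f k)) :=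
              integral_congr_ae (hψae k)
      rw [hsum, hllr] at hgibbs
      exact hgibbs
    have htc : Tendsto (fun c : ℝ => D + ((1 + Real.exp (-c)) ^ l - 1)) atTop
        (𝓝 (D + ((1 + 0) ^ l - 1))) := by
      refine Filter.Tendsto.const_add D (Filter.Tendsto.sub_const ?_ 1)
      refine Filter.Tendsto.pow ?_ l
      exact Filter.Tendsto.const_add 1 (Real.tendsto_exp_atBot.comp tendsto_neg_atTop_atBot)
    have hAle : (∑ k : Fin l, ∫ a, min (φ a) (n : ℝ) ∂(P.map (fun f : Fin l → E => f k)))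
        ≤ D := by
      have := ge_of_tendsto htc (Filter.Eventually.of_forall hstep)
      simpa using this
    have hPbar_split : ∫ a, min (φ a) (n : ℝ) ∂Pbar
        = (l : ℝ)⁻¹ * ∑ k : Fin l, ∫ a, min (φ a) (n : ℝ) ∂(P.map (fun f : Fin l → E => f k)) := by
      rw [hPbardef, integral_smul_measure,
        integral_finset_sum_measure fun k _ => hmin_int _ (hφneg_int_Pk k)
          (by haveI := Measure.isProbabilityMeasure_map (f := fun f : Fin l → E => f k) (μ := P) (measurable_pi_apply k).aemeasurable; infer_instance) n]
      simp [ENNReal.toReal_inv]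
    rw [hPbar_split, ← mul_assoc, mul_inv_cancel₀ (ne_of_gt hlR), one_mul]
    exact hAle
  -- integrability of φ with respect to Pbar
  have hmin_int_Pbar : ∀ n : ℕ, Integrable (fun a => min (φ a) (n : ℝ)) Pbar :=
    fun n => hmin_int Pbar hφneg_int (by infer_instance) n
  set B : ℝ := ∫ a, max (-φ a) 0 ∂Pbar with hBdef
  have hplus : ∀ n : ℕ, (fun a => min (max (φ a) 0) (n : ℝ))
      = fun a => min (φ a) (n : ℝ) + max (-φ a) 0 := by
    intro n; funext a
    have hn0 : (0 : ℝ) ≤ (n : ℝ) := Nat.cast_nonneg n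
    rcases le_total (φ a) 0 with h | h
    · rw [max_eq_right h, min_eq_left hn0, min_eq_left (h.trans hn0),
        max_eq_left (neg_nonneg.2 h)]
      ring
    · rw [max_eq_left h, max_eq_right (neg_nonpos.2 h)]
      ring
  have hplus_int : ∀ n : ℕ, Integrable (fun a => min (max (φ a) 0) (n : ℝ)) Pbar := fun n => by
    rw [hplus n]; exact (hmin_int_Pbar n).add hφneg_int
  have hbound1 : ∀ n : ℕ, ∫ a, min (max (φ a) 0) (n : ℝ) ∂Pbar ≤ (l : ℝ)⁻¹ * D + B := by
    intro n
    rw [hplus n, integral_add (hmin_int_Pbar n) hφneg_int]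
    have h1 : ∫ a, min (φ a) (n : ℝ) ∂Pbar ≤ (l : ℝ)⁻¹ * D := by
      rw [inv_mul_eq_div]
      exact (le_div_iff₀ hlR).mpr (by rw [mul_comm]; exact hkey n)
    rw [hBdef]
    linarith [h1]
  have hlint_plus : ∫⁻ a, ENNReal.ofReal (max (φ a) 0) ∂Pbar
      ≤ ENNReal.ofReal ((l : ℝ)⁻¹ * D + B) := by
    have hsup : ∀ a, ENNReal.ofReal (max (φ a) 0)
        = ⨆ n : ℕ, ENNReal.ofReal (min (max (φ a) 0) (n : ℝ)) := by
      intro a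
      refine le_antisymm ?_ (iSup_le fun n => ENNReal.ofReal_le_ofReal (min_le_left _ _))
      obtain ⟨n, hn⟩ := exists_nat_ge (max (φ a) 0)
      refine le_trans (le_of_eq ?_) (le_iSup _ n)
      rw [min_eq_left hn]
    have hmono : Monotone fun (n : ℕ) (a : E) => ENNReal.ofReal (min (max (φ a) 0) (n : ℝ)) := by
      intro m n' hmn a
      exact ENNReal.ofReal_le_ofReal (min_le_min le_rfl (by exact_mod_cast hmn))
    calc ∫⁻ a, ENNReal.ofReal (max (φ a) 0) ∂Pbar
        = ∫⁻ a, ⨆ n : ℕ, ENNReal.ofReal (min (max (φ a) 0) (n : ℝ)) ∂Pbar :=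
          lintegral_congr fun a => hsup a
      _ = ⨆ n : ℕ, ∫⁻ a, ENNReal.ofReal (min (max (φ a) 0) (n : ℝ)) ∂Pbar :=
          lintegral_iSup
            (fun n => ((hφm.max measurable_const).min measurable_const).ennreal_ofReal) hmono
      _ ≤ ENNReal.ofReal ((l : ℝ)⁻¹ * D + B) := by
          refine iSup_le fun n => ?_
          rw [← ofReal_integral_eq_lintegral_ofReal (hplus_int n)
            (Filter.Eventually.of_forall fun a => le_min (le_max_right _ _) (Nat.cast_nonneg n))]
          exact ENNReal.ofReal_le_ofReal (hbound1 n)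
  have hφ_int : Integrable φ Pbar := by
    refine ⟨hφm.aestronglyMeasurable, ?_⟩
    rw [hasFiniteIntegral_iff_norm]
    have habs : ∀ a, ENNReal.ofReal ‖φ a‖
        = ENNReal.ofReal (max (φ a) 0) + ENNReal.ofReal (max (-φ a) 0) := by
      intro a
      rw [Real.norm_eq_abs, ← ENNReal.ofReal_add (le_max_right _ _) (le_max_right _ _)]
      congr 1
      rcases le_total (φ a) 0 with h | h
      · rw [abs_of_nonpos h, max_eq_right h, max_eq_left (neg_nonneg.2 h)]; ring
      · rw [abs_of_nonneg h, max_eq_left h, max_eq_right (neg_nonpos.2 h)]; ring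
    simp_rw [habs]
    rw [lintegral_add_left (hφm.max measurable_const).ennreal_ofReal]
    exact ENNReal.add_lt_top.2 ⟨lt_of_le_of_lt hlint_plus ENNReal.ofReal_lt_top,
      lt_of_le_of_lt hneg_lint ENNReal.one_lt_top⟩
  -- pass to the limit in n
  have htend : Tendsto (fun n : ℕ => ∫ a, min (φ a) (n : ℝ) ∂Pbar) atTop
      (𝓝 (∫ a, φ a ∂Pbar)) := by
    refine tendsto_integral_of_dominated_convergence (fun a => |φ a|)
      (fun n => (hφm.min measurable_const).aestronglyMeasurable) hφ_int.abs
      (fun n => Filter.Eventually.of_forall fun a => ?_)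
      (Filter.Eventually.of_forall fun a => ?_)
    · have hn0 : (0 : ℝ) ≤ (n : ℝ) := Nat.cast_nonneg n
      rw [Real.norm_eq_abs]
      show |min (φ a) (n : ℝ)| ≤ |φ a|
      rcases le_total (φ a) 0 with h | h
      · rw [min_eq_left (h.trans hn0)]
      · rw [abs_of_nonneg (le_min h hn0), abs_of_nonneg h]
        exact min_le_left _ _
    · obtain ⟨n0, hn0⟩ := exists_nat_ge (φ a)
      refine Filter.Tendsto.congr' ?_ tendsto_const_nhds
      filter_upwards [eventually_ge_atTop n0] with n hn
      exact (min_eq_left (hn0.trans (by exact_mod_cast hn))).symm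
  have hfinal : (l : ℝ) * ∫ a, φ a ∂Pbar ≤ D :=
    le_of_tendsto (htend.const_mul (l : ℝ)) (Filter.Eventually.of_forall fun n => hkey n)
  -- wrap up
  have hLHS : klDiv Pbar Q = ENNReal.ofReal (∫ a, φ a ∂Pbar) := by
    unfold klDiv
    rw [if_pos ⟨hPbarQ, hφ_int⟩]
  rw [hRHS, hLHS]
  rcases le_or_gt (∫ a, φ a ∂Pbar) 0 with h0 | h0
  · rw [ENNReal.ofReal_of_nonpos h0, mul_zero]
    exact zero_le
  · rw [show (l : ℝ≥0∞) = ENNReal.ofReal (l : ℝ) from (ENNReal.ofReal_natCast l).symm,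
      ← ENNReal.ofReal_mul (Nat.cast_nonneg l)]
    exact ENNReal.ofReal_le_ofReal hfinal
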